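/- Let T ⊂ ℝ^d be bounded and define Ψ^loc(T) = sup_{ε>0} ε·√(h_T^loc(ε)) and Ψ(T) = sup_{ε>0} ε·√(h_T(ε)), where h_T(ε) = log M(T, εB₂) and h_T^loc(ε) = sup_{δ ≥ ε} sup_{x∈T} log M(T ∩ (x + 2δB₂), δB₂). Then Ψ^loc(T) ≤ Ψ(T) ≤ 4·Ψ^loc(T). -/

import Mathlib

open MeasureTheory Metric Set
open scoped ENNReal NNReal

noncomputable section

/-- `packNum A B` is the `B`-packing number of `A`: the largest cardinality of a finite
subset `A₀ ⊆ A` such that `x − y ∉ B` for all distinct `x, y ∈ A₀`. -/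
def packNum {E : Type*} [Sub E] (A B : Set E) : ℕ :=
  sSup {n : ℕ | ∃ s : Finset E, ↑s ⊆ A ∧
    (∀ x ∈ s, ∀ y ∈ s, x ≠ y → x - y ∉ B) ∧ s.card = n}

/-- Global packing entropy `h_T(ε) = log M(T, εB₂)`. -/
def entGlob {d : ℕ} (T : Set (EuclideanSpace ℝ (Fin d))) (ε : ℝ) : ℝ :=
  Real.log (packNum T (closedBall 0 ε))

/-- Local packing entropy
`h_T^loc(ε) = sup_{δ ≥ ε} sup_{x ∈ T} log M(T ∩ (x + 2δB₂), δB₂)`. -/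
def entLoc {d : ℕ} (T : Set (EuclideanSpace ℝ (Fin d))) (ε : ℝ) : ℝ :=
  ⨆ δ : {δ : ℝ // ε ≤ δ}, ⨆ x : T,
    Real.log (packNum (T ∩ closedBall (x : EuclideanSpace ℝ (Fin d)) (2 * δ.1))
      (closedBall 0 δ.1))

namespace Statement9Aux

variable {d : ℕ}

local notation "E" => EuclideanSpace ℝ (Fin d)

/-- The set whose supremum is `packNum A (closedBall 0 δ)`. -/
def PS (A : Set E) (δ : ℝ) : Set ℕ :=
  {n : ℕ | ∃ s : Finset E, ↑s ⊆ A ∧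
    (∀ x ∈ s, ∀ y ∈ s, x ≠ y → x - y ∉ closedBall 0 δ) ∧ s.card = n}

lemma packNum_eq (A : Set E) (δ : ℝ) : packNum A (closedBall 0 δ) = sSup (PS A δ) := rfl

lemma sep_iff {x y : E} {δ : ℝ} : x - y ∉ closedBall (0 : E) δ ↔ δ < dist x y := by
  rw [mem_closedBall_zero_iff, ← dist_eq_norm]
  exact not_le

lemma zero_mem_PS (A : Set E) (δ : ℝ) : 0 ∈ PS A δ :=
  ⟨∅, by simp, by simp, rfl⟩

lemma bddAbove_PS {A : Set E} (hA : Bornology.IsBounded A) {δ : ℝ} (hδ : 0 < δ) :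
    BddAbove (PS A δ) := by
  classical
  have htb : TotallyBounded A := hA.isCompact_closure.totallyBounded.subset subset_closure
  obtain ⟨t, htf, hcov⟩ := totallyBounded_iff.mp htb (δ / 2) (by positivity)
  refine ⟨htf.toFinset.card, ?_⟩
  rintro n ⟨s, hsA, hsep, rfl⟩
  have hmem : ∀ z ∈ s, ∃ y ∈ t, z ∈ ball y (δ / 2) := by
    intro z hz
    have := hcov (hsA hz)
    simpa using this
  set f : E → E := fun z => if h : ∃ y ∈ t, z ∈ ball y (δ / 2) then h.choose else z with hf
  have hft : ∀ z ∈ s, f z ∈ htf.toFinset ∧ z ∈ ball (f z) (δ / 2) := by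
    intro z hz
    have h := hmem z hz
    simp only [hf, dif_pos h]
    exact ⟨by simpa using h.choose_spec.1, h.choose_spec.2⟩
  refine Finset.card_le_card_of_injOn f (fun z hz => (hft z hz).1) ?_
  intro z₁ h₁ z₂ h₂ hEq
  by_contra hne
  have hd := sep_iff.mp (hsep z₁ h₁ z₂ h₂ hne)
  have b₁ := (hft z₁ h₁).2
  have b₂ := (hft z₂ h₂).2
  rw [mem_ball] at b₁ b₂
  rw [hEq] at b₁
  have : dist z₁ z₂ ≤ dist z₁ (f z₂) + dist z₂ (f z₂) := dist_triangle_right _ _ _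
  linarith

lemma card_le_packNum {A : Set E} (hA : Bornology.IsBounded A) {δ : ℝ} (hδ : 0 < δ)
    {s : Finset E} (hsA : ↑s ⊆ A)
    (hsep : ∀ x ∈ s, ∀ y ∈ s, x ≠ y → x - y ∉ closedBall (0 : E) δ) :
    s.card ≤ packNum A (closedBall 0 δ) :=
  le_csSup (bddAbove_PS hA hδ) ⟨s, hsA, hsep, rfl⟩

lemma packNum_mem {A : Set E} (hA : Bornology.IsBounded A) {δ : ℝ} (hδ : 0 < δ) :
    packNum A (closedBall 0 δ) ∈ PS A δ :=
  Nat.sSup_mem ⟨0, zero_mem_PS A δ⟩ (bddAbove_PS hA hδ)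

lemma one_le_packNum {A : Set E} (hA : Bornology.IsBounded A) {δ : ℝ} (hδ : 0 < δ)
    (hne : A.Nonempty) : 1 ≤ packNum A (closedBall 0 δ) := by
  obtain ⟨x, hx⟩ := hne
  have : ({x} : Finset E).card ≤ packNum A (closedBall 0 δ) := by
    refine card_le_packNum hA hδ (by simpa using hx) ?_
    intro a ha b hb hab
    simp only [Finset.mem_singleton] at ha hb
    exact absurd (ha.trans hb.symm) hab
  simpa using this

/-- Monotonicity: smaller set, larger separation radius gives smaller packing number. -/
lemma packNum_mono {A A' : Set E} (hA' : Bornology.IsBounded A') (hsub : A ⊆ A')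
    {ε δ : ℝ} (hε : 0 < ε) (hεδ : ε ≤ δ) :
    packNum A (closedBall 0 δ) ≤ packNum A' (closedBall 0 ε) := by
  have hA : Bornology.IsBounded A := hA'.subset hsub
  obtain ⟨s, hsA, hsep, hcard⟩ := packNum_mem hA (hε.trans_le hεδ)
  rw [← hcard]
  refine card_le_packNum hA' hε (hsA.trans hsub) ?_
  intro x hx y hy hxy
  rw [sep_iff]
  exact hεδ.trans_lt (sep_iff.mp (hsep x hx y hy hxy))

lemma log_nat_nonneg (n : ℕ) : 0 ≤ Real.log n := Real.log_natCast_nonneg n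

lemma log_nat_mono {n m : ℕ} (h : n ≤ m) : Real.log n ≤ Real.log m := by
  rcases Nat.eq_zero_or_pos n with h0 | h0
  · simp [h0, log_nat_nonneg m]
  · exact Real.log_le_log (by exact_mod_cast h0) (by exact_mod_cast h)

lemma entGlob_nonneg (T : Set E) (ε : ℝ) : 0 ≤ entGlob T ε := log_nat_nonneg _

lemma entLoc_nonneg (T : Set E) (ε : ℝ) : 0 ≤ entLoc T ε :=
  Real.iSup_nonneg fun _ => Real.iSup_nonneg fun _ => log_nat_nonneg _

/-- Uniform bound on all terms appearing in `entLoc T ε`. -/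
lemma loc_term_le {T : Set E} {ε : ℝ} (hbd : Bornology.IsBounded T) (hε : 0 < ε) {δ : ℝ} (hδ : ε ≤ δ) (x : E) :
    Real.log (packNum (T ∩ closedBall x (2 * δ)) (closedBall 0 δ))
      ≤ Real.log (packNum T (closedBall 0 ε)) :=
  log_nat_mono (packNum_mono hbd inter_subset_left hε hδ)

lemma bddAbove_loc_inner {T : Set E} {ε : ℝ} (hbd : Bornology.IsBounded T) (hε : 0 < ε) {δ : ℝ} (hδ : ε ≤ δ) :
    BddAbove (Set.range fun x : T =>
      Real.log (packNum (T ∩ closedBall (x : E) (2 * δ)) (closedBall 0 δ))) := by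
  refine ⟨Real.log (packNum T (closedBall 0 ε)), ?_⟩
  rintro y ⟨x, rfl⟩
  exact loc_term_le hbd hε hδ x

lemma bddAbove_loc_outer {T : Set E} {ε : ℝ} (hbd : Bornology.IsBounded T) (hε : 0 < ε) :
    BddAbove (Set.range fun δ : {δ : ℝ // ε ≤ δ} => ⨆ x : T,
      Real.log (packNum (T ∩ closedBall (x : E) (2 * δ.1)) (closedBall 0 δ.1))) := by
  refine ⟨Real.log (packNum T (closedBall 0 ε)), ?_⟩
  rintro y ⟨δ, rfl⟩
  exact Real.iSup_le (fun x => loc_term_le hbd hε δ.2 x) (log_nat_nonneg _)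

lemma le_entLoc {T : Set E} {ε : ℝ} (hbd : Bornology.IsBounded T) (hε : 0 < ε) {δ : ℝ} (hδ : ε ≤ δ) {x : E}
    (hx : x ∈ T) :
    Real.log (packNum (T ∩ closedBall x (2 * δ)) (closedBall 0 δ)) ≤ entLoc T ε := by
  have h1 := le_ciSup (bddAbove_loc_inner hbd hε hδ) (⟨x, hx⟩ : T)
  exact h1.trans (le_ciSup (bddAbove_loc_outer hbd hε) (⟨δ, hδ⟩ : {δ : ℝ // ε ≤ δ}))

/-- Key submultiplicativity step: `h_T(δ) ≤ h_T(2δ) + h_T^loc(δ)`. -/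
lemma step {T : Set E} (hbd : Bornology.IsBounded T) {δ : ℝ} (hδ : 0 < δ) :
    entGlob T δ ≤ entGlob T (2 * δ) + entLoc T δ := by
  classical
  obtain ⟨s, hsT, hsep, hcard⟩ := packNum_mem hbd hδ
  rcases s.eq_empty_or_nonempty with hse | hse
  · have h0 : packNum T (closedBall (0 : E) δ) = 0 := by rw [← hcard, hse]; simp
    rw [entGlob, h0]
    simpa using add_nonneg (entGlob_nonneg T (2 * δ)) (entLoc_nonneg T δ)
  · -- a maximal 2δ-separated subset of s
    have hsbd : Bornology.IsBounded (↑s : Set E) := s.finite_toSet.isBounded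
    have h2δ : (0 : ℝ) < 2 * δ := by linarith
    obtain ⟨u, hus, husep, hucard⟩ := packNum_mem hsbd h2δ
    have hune : u.Nonempty := by
      rw [← Finset.card_pos, hucard]
      exact one_le_packNum hsbd h2δ (Finset.coe_nonempty.mpr hse)
    -- every point of s is within 2δ of some point of u
    have hcov : ∀ z ∈ s, ∃ y ∈ u, dist z y ≤ 2 * δ := by
      intro z hz
      by_contra hcon
      push_neg at hcon
      have hzu : z ∉ u := by
        intro h
        have := hcon z h
        rw [dist_self] at this
        linarith
      have : (insert z u).card ≤ packNum (↑s : Set E) (closedBall 0 (2 * δ)) := by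
        refine card_le_packNum hsbd h2δ ?_ ?_
        · intro a ha
          simp only [Finset.coe_insert, Set.mem_insert_iff] at ha
          rcases ha with rfl | ha
          · exact hz
          · exact hus ha
        · intro a ha b hb hab
          rw [sep_iff]
          simp only [Finset.mem_insert] at ha hb
          rcases ha with rfl | ha
          · rcases hb with rfl | hb
            · exact absurd rfl hab
            · exact hcon b hb
          · rcases hb with rfl | hb
            · rw [dist_comm]; exact hcon a ha
            · exact sep_iff.mp (husep a ha b hb hab)
      rw [Finset.card_insert_of_notMem hzu, hucard] at this
      omega
    -- counting
    set m : ℕ := u.sup (fun y => packNum (T ∩ closedBall y (2 * δ)) (closedBall 0 δ)) with hm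
    have hsm : s.card ≤ u.card * m := by
      have hsub : s ⊆ u.biUnion (fun y => s.filter (fun z => dist z y ≤ 2 * δ)) := by
        intro z hz
        obtain ⟨y, hy, hzy⟩ := hcov z hz
        exact Finset.mem_biUnion.mpr ⟨y, hy, Finset.mem_filter.mpr ⟨hz, hzy⟩⟩
      calc s.card ≤ (u.biUnion (fun y => s.filter (fun z => dist z y ≤ 2 * δ))).card :=
            Finset.card_le_card hsub
        _ ≤ ∑ y ∈ u, (s.filter (fun z => dist z y ≤ 2 * δ)).card := Finset.card_biUnion_le
        _ ≤ u.card * m := by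
            have := Finset.sum_le_card_nsmul u
              (fun y => (Finset.filter (fun z => dist z y ≤ 2 * δ) s).card) m ?_
            · simpa [smul_eq_mul] using this
            refine fun y hy => ?_
            have hy' : packNum (T ∩ closedBall y (2 * δ)) (closedBall 0 δ) ≤ m := by
              rw [hm]
              exact Finset.le_sup (f := fun y => packNum (T ∩ closedBall y (2 * δ)) (closedBall 0 δ)) hy
            refine le_trans ?_ hy'
            refine card_le_packNum (hbd.subset inter_subset_left) hδ ?_ ?_
            · intro z hz
              simp only [Finset.coe_filter, Set.mem_setOf_eq] at hz
              exact ⟨hsT hz.1, by rw [mem_closedBall]; exact hz.2⟩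
            · intro a ha b hb hab
              rw [Finset.mem_filter] at ha hb
              exact hsep a ha.1 b hb.1 hab
    obtain ⟨y₀, hy₀, hmy₀⟩ := Finset.exists_mem_eq_sup u hune
      (fun y => packNum (T ∩ closedBall y (2 * δ)) (closedBall 0 δ))
    have hy₀T : y₀ ∈ T := hsT (hus hy₀)
    have hm1 : 1 ≤ m := by
      rw [hm, hmy₀]
      exact one_le_packNum (hbd.subset inter_subset_left) hδ
        ⟨y₀, hy₀T, by rw [mem_closedBall, dist_self]; linarith⟩
    have hu1 : 1 ≤ u.card := hune.card_pos
    have hlogu : Real.log (u.card : ℝ) ≤ entGlob T (2 * δ) := by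
      refine log_nat_mono ?_
      refine card_le_packNum hbd h2δ (fun z hz => hsT (hus hz)) ?_
      exact fun a ha b hb hab => husep a ha b hb hab
    have hlogm : Real.log (m : ℝ) ≤ entLoc T δ := by
      rw [hm, hmy₀]
      exact le_entLoc hbd hδ le_rfl hy₀T
    calc entGlob T δ = Real.log (s.card : ℝ) := by rw [entGlob, ← hcard]
      _ ≤ Real.log ((u.card * m : ℕ) : ℝ) := log_nat_mono hsm
      _ = Real.log (u.card : ℝ) + Real.log (m : ℝ) := by
          rw [Nat.cast_mul,
            Real.log_mul (Nat.cast_ne_zero.mpr (by omega)) (Nat.cast_ne_zero.mpr (by omega))]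
      _ ≤ entGlob T (2 * δ) + entLoc T δ := add_le_add hlogu hlogm

lemma le_sq_sqrt' (a : ℝ) : a ≤ Real.sqrt a ^ 2 := by
  rcases le_or_gt 0 a with h | h
  · rw [Real.sq_sqrt h]
  · have : Real.sqrt a = 0 := Real.sqrt_eq_zero'.mpr h.le
    rw [this]
    nlinarith

lemma sqrt_add_le' (a b : ℝ) : Real.sqrt (a + b) ≤ Real.sqrt a + Real.sqrt b := by
  have h : a + b ≤ (Real.sqrt a + Real.sqrt b) ^ 2 := by
    have ha := le_sq_sqrt' a
    have hb := le_sq_sqrt' b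
    nlinarith [Real.sqrt_nonneg a, Real.sqrt_nonneg b]
  calc Real.sqrt (a + b) ≤ Real.sqrt ((Real.sqrt a + Real.sqrt b) ^ 2) := Real.sqrt_le_sqrt h
    _ = Real.sqrt a + Real.sqrt b := Real.sqrt_sq (by positivity)

lemma sqrt_sum_le (f : ℕ → ℝ) (k : ℕ) :
    Real.sqrt (∑ j ∈ Finset.range k, f j) ≤ ∑ j ∈ Finset.range k, Real.sqrt (f j) := by
  induction k with
  | zero => simp
  | succ k ih =>
      rw [Finset.sum_range_succ, Finset.sum_range_succ]
      exact (sqrt_add_le' _ _).trans (add_le_add ih le_rfl)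

/-- Dyadic iteration of the submultiplicativity step. -/
lemma iter {T : Set E} (hbd : Bornology.IsBounded T) {ε : ℝ} (hε : 0 < ε) (k : ℕ) :
    entGlob T ε ≤ entGlob T (2 ^ k * ε) + ∑ j ∈ Finset.range k, entLoc T (2 ^ j * ε) := by
  induction k with
  | zero => simp
  | succ k ih =>
      have hpos : (0 : ℝ) < 2 ^ k * ε := by positivity
      have hstep := step hbd hpos
      have h2 : 2 * (2 ^ k * ε) = 2 ^ (k + 1) * ε := by ring
      rw [h2] at hstep
      rw [Finset.sum_range_succ]
      linarith

lemma terminal {T : Set E} (hbd : Bornology.IsBounded T) :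
    ∃ D : ℝ, 0 < D ∧ ∀ δ : ℝ, D ≤ δ → entGlob T δ ≤ 0 := by
  obtain ⟨R, hR⟩ := hbd.subset_closedBall 0
  refine ⟨2 * |R| + 1, by positivity, ?_⟩
  intro δ hδ
  have h1 : packNum T (closedBall (0 : E) δ) ≤ 1 := by
    rw [packNum_eq]
    refine csSup_le ⟨0, zero_mem_PS T δ⟩ ?_
    rintro n ⟨s, hsT, hsep, rfl⟩
    by_contra hc
    push_neg at hc
    obtain ⟨a, ha, b, hb, hab⟩ := Finset.one_lt_card.mp hc
    have hd := sep_iff.mp (hsep a ha b hb hab)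
    have haT : a ∈ closedBall (0 : E) R := hR (hsT ha)
    have hbT : b ∈ closedBall (0 : E) R := hR (hsT hb)
    rw [mem_closedBall] at haT hbT
    have : dist a b ≤ dist a 0 + dist b 0 := dist_triangle_right _ _ _
    have hRa : |R| ≥ R := le_abs_self R
    have hd0a : dist a (0 : E) ≥ 0 := dist_nonneg
    linarith
  calc entGlob T δ = Real.log (packNum T (closedBall (0 : E) δ)) := rfl
    _ ≤ Real.log ((1 : ℕ) : ℝ) := log_nat_mono h1
    _ = 0 := by simp

/-- Quantitative form of the second inequality. -/
lemma globBound {T : Set E} (hbd : Bornology.IsBounded T) {B : ℝ}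
    (hB : ∀ δ : ℝ, 0 < δ → δ * Real.sqrt (entLoc T δ) ≤ B) {ε : ℝ} (hε : 0 < ε) :
    ε * Real.sqrt (entGlob T ε) ≤ 2 * B := by
  have hB0 : 0 ≤ B := le_trans (by positivity) (hB 1 one_pos)
  obtain ⟨D, hD, hterm⟩ := terminal hbd
  obtain ⟨k, hk⟩ := pow_unbounded_of_one_lt (D / ε) (one_lt_two (α := ℝ))
  have hk' : D ≤ 2 ^ k * ε := by
    rw [div_lt_iff₀ hε] at hk
    linarith
  have h1 : entGlob T ε ≤ ∑ j ∈ Finset.range k, entLoc T (2 ^ j * ε) := by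
    have h := iter hbd hε k
    have h2 := hterm (2 ^ k * ε) hk'
    linarith
  have h2 : ∀ j : ℕ, entLoc T (2 ^ j * ε) ≤ (B / (2 ^ j * ε)) ^ 2 := by
    intro j
    have hp : (0 : ℝ) < 2 ^ j * ε := by positivity
    have hs : Real.sqrt (entLoc T (2 ^ j * ε)) ≤ B / (2 ^ j * ε) := by
      rw [le_div_iff₀ hp, mul_comm]
      exact hB _ hp
    calc entLoc T (2 ^ j * ε) ≤ Real.sqrt (entLoc T (2 ^ j * ε)) ^ 2 := le_sq_sqrt' _
      _ ≤ (B / (2 ^ j * ε)) ^ 2 := pow_le_pow_left₀ (Real.sqrt_nonneg _) hs 2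
  have h3 : entGlob T ε ≤ ∑ j ∈ Finset.range k, (B / (2 ^ j * ε)) ^ 2 :=
    h1.trans (Finset.sum_le_sum fun j _ => h2 j)
  have h4 : Real.sqrt (entGlob T ε) ≤ ∑ j ∈ Finset.range k, B / (2 ^ j * ε) := by
    refine (Real.sqrt_le_sqrt h3).trans ?_
    refine (sqrt_sum_le _ k).trans ?_
    refine Finset.sum_le_sum fun j _ => ?_
    rw [Real.sqrt_sq (by positivity)]
  have h5 : ε * Real.sqrt (entGlob T ε) ≤ ε * ∑ j ∈ Finset.range k, B / (2 ^ j * ε) :=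
    mul_le_mul_of_nonneg_left h4 hε.le
  have h6 : ε * ∑ j ∈ Finset.range k, B / (2 ^ j * ε)
      = B * ∑ j ∈ Finset.range k, (1 / 2 : ℝ) ^ j := by
    rw [Finset.mul_sum, Finset.mul_sum]
    refine Finset.sum_congr rfl fun j _ => ?_
    field_simp
    rw [mul_assoc, ← mul_pow]; norm_num
  have h7 : B * ∑ j ∈ Finset.range k, (1 / 2 : ℝ) ^ j ≤ B * 2 :=
    mul_le_mul_of_nonneg_left (sum_geometric_two_le k) hB0
  linarith

/-- Quantitative form of the first inequality. -/
lemma locBound {T : Set E} (hbd : Bornology.IsBounded T) {B : ℝ}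
    (hB : ∀ δ : ℝ, 0 < δ → δ * Real.sqrt (entGlob T δ) ≤ B) {ε : ℝ} (hε : 0 < ε) :
    ε * Real.sqrt (entLoc T ε) ≤ B := by
  have hB0 : 0 ≤ B := le_trans (by positivity) (hB 1 one_pos)
  have key : entLoc T ε ≤ (B / ε) ^ 2 := by
    haveI : Nonempty {δ : ℝ // ε ≤ δ} := ⟨⟨ε, le_rfl⟩⟩
    refine ciSup_le fun δ' => Real.iSup_le (fun x => ?_) (by positivity)
    have hδ'pos : 0 < δ'.1 := hε.trans_le δ'.2
    have h1 : Real.log (packNum (T ∩ closedBall (x : E) (2 * δ'.1)) (closedBall 0 δ'.1))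
        ≤ entGlob T δ'.1 :=
      log_nat_mono (packNum_mono hbd inter_subset_left hδ'pos le_rfl)
    have h2 : entGlob T δ'.1 ≤ (B / δ'.1) ^ 2 := by
      have hs : Real.sqrt (entGlob T δ'.1) ≤ B / δ'.1 := by
        rw [le_div_iff₀ hδ'pos, mul_comm]
        exact hB _ hδ'pos
      calc entGlob T δ'.1 ≤ Real.sqrt (entGlob T δ'.1) ^ 2 := le_sq_sqrt' _
        _ ≤ (B / δ'.1) ^ 2 := pow_le_pow_left₀ (Real.sqrt_nonneg _) hs 2
    have h3 : (B / δ'.1) ^ 2 ≤ (B / ε) ^ 2 := by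
      refine pow_le_pow_left₀ (by positivity) ?_ 2
      exact div_le_div_of_nonneg_left hB0 hε δ'.2
    linarith
  have h4 : Real.sqrt (entLoc T ε) ≤ B / ε := by
    refine (Real.sqrt_le_sqrt key).trans ?_
    rw [Real.sqrt_sq (by positivity)]
  calc ε * Real.sqrt (entLoc T ε) ≤ ε * (B / ε) := mul_le_mul_of_nonneg_left h4 hε.le
    _ = B := by field_simp

end Statement9Aux

open Statement9Aux in
/-- For bounded `T ⊆ ℝ^d`, with `Ψ^loc(T) = sup_{ε>0} ε√(h_T^loc(ε))`
and `Ψ(T) = sup_{ε>0} ε√(h_T(ε))`, one has `Ψ^loc(T) ≤ Ψ(T) ≤ 4Ψ^loc(T)`. -/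
theorem statement9 {d : ℕ} (T : Set (EuclideanSpace ℝ (Fin d)))
    (hbd : Bornology.IsBounded T) :
    (⨆ ε : {ε : ℝ // 0 < ε}, ε.1 * Real.sqrt (entLoc T ε.1)) ≤
      (⨆ ε : {ε : ℝ // 0 < ε}, ε.1 * Real.sqrt (entGlob T ε.1)) ∧
    (⨆ ε : {ε : ℝ // 0 < ε}, ε.1 * Real.sqrt (entGlob T ε.1)) ≤
      4 * ⨆ ε : {ε : ℝ // 0 < ε}, ε.1 * Real.sqrt (entLoc T ε.1) := by
  set G : {ε : ℝ // 0 < ε} → ℝ := fun ε => ε.1 * Real.sqrt (entGlob T ε.1) with hG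
  set L : {ε : ℝ // 0 < ε} → ℝ := fun ε => ε.1 * Real.sqrt (entLoc T ε.1) with hL
  constructor
  · by_cases hb : BddAbove (Set.range G)
    · refine ciSup_le fun ε => ?_
      exact locBound hbd (fun δ hδ => le_ciSup hb (⟨δ, hδ⟩ : {ε : ℝ // 0 < ε})) ε.2
    · have hb2 : ¬ BddAbove (Set.range L) := by
        intro h
        apply hb
        refine ⟨2 * ⨆ ε, L ε, ?_⟩
        rintro y ⟨ε, rfl⟩
        exact globBound hbd (fun δ hδ => le_ciSup h (⟨δ, hδ⟩ : {ε : ℝ // 0 < ε})) ε.2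
      rw [Real.iSup_of_not_bddAbove hb, Real.iSup_of_not_bddAbove hb2]
  · by_cases hb : BddAbove (Set.range L)
    · have hL0 : 0 ≤ ⨆ ε, L ε :=
        le_trans (by positivity) (le_ciSup hb (⟨1, one_pos⟩ : {ε : ℝ // 0 < ε}))
      refine ciSup_le fun ε => ?_
      have h1 : G ε ≤ 2 * ⨆ ε, L ε :=
        globBound hbd (fun δ hδ => le_ciSup hb (⟨δ, hδ⟩ : {ε : ℝ // 0 < ε})) ε.2
      linarith
    · have hb2 : ¬ BddAbove (Set.range G) := by
        intro h
        apply hb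
        refine ⟨⨆ ε, G ε, ?_⟩
        rintro y ⟨ε, rfl⟩
        exact locBound hbd (fun δ hδ => le_ciSup h (⟨δ, hδ⟩ : {ε : ℝ // 0 < ε})) ε.2
      rw [Real.iSup_of_not_bddAbove hb, Real.iSup_of_not_bddAbove hb2]
      simp
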